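/- Let H = M₂(ℂ) equipped with the Hilbert–Schmidt inner product ⟨ξ,η⟩ = Tr(η*ξ), let M ⊆ B(H) be the von Neumann algebra of left multiplication operators L_b : ξ ↦ bξ for b ∈ M₂(ℂ), and define τ on the projections of M by τ(L_p) = Tr(p) (the unnormalized trace). Let a ∈ B(H) be the transpose map ξ ↦ ξᵗ. Then: (1) a is self-adjoint; (2) τ(s^M(aξ)) = τ(s^M(ξ)) for every ξ ∈ H, so a is 1-vector-constrained (τ(s^M(aξ)) ≤ 1·τ(s^M(ξ)) and likewise for a* = a); but (3) for the projection q = L_{e₁₁} ∈ M one has s_ℓ^M(aq) = 1_H, hence τ(s_ℓ^M(aq)) = 2 = 2·τ(q), so a is not 1-constrained, i.e., the inequality τ(s_ℓ^M(aq)) ≤ 1·τ(q) fails. -/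

import Mathlib

open Matrix

noncomputable section

namespace QCG12

/-- The 4-dimensional Hilbert space `H = M₂(ℂ)` (with the Hilbert–Schmidt inner product
`⟨ξ, η⟩ = Tr(η* ξ)` encoded by `hsInner` below). -/
abbrev HS2 : Type := Matrix (Fin 2) (Fin 2) ℂ

/-- The Hilbert–Schmidt inner product `⟨ξ, η⟩ = Tr(η* ξ)`. -/
def hsInner (ξ η : HS2) : ℂ := (ηᴴ * ξ).trace

/-- Left multiplication `L_b : ξ ↦ b ξ`. -/
def Lmul (b : HS2) : HS2 →ₗ[ℂ] HS2 := LinearMap.mulLeft ℂ b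

/-- The von Neumann algebra `M` of left multiplication operators. -/
def Mset : Set (HS2 →ₗ[ℂ] HS2) := Set.range Lmul

/-- An orthogonal projection belonging to `M`: an idempotent, self-adjoint (w.r.t. the
Hilbert–Schmidt inner product) left multiplication operator. -/
def IsProjInM (P : HS2 →ₗ[ℂ] HS2) : Prop :=
  P ∈ Mset ∧ P ∘ₗ P = P ∧ ∀ ξ η : HS2, hsInner (P ξ) η = hsInner ξ (P η)

/-- `s` is the `M`-support of `ξ`: the smallest projection in `M` fixing `ξ`. -/
def IsVecSupp (ξ : HS2) (s : HS2 →ₗ[ℂ] HS2) : Prop :=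
  IsProjInM s ∧ s ξ = ξ ∧
    ∀ p : HS2 →ₗ[ℂ] HS2, IsProjInM p → p ξ = ξ → p ∘ₗ s = s

/-- `s` is the left `M`-support of `a`: the smallest projection `q ∈ M` with `q a = a`. -/
def IsLeftSupp (a s : HS2 →ₗ[ℂ] HS2) : Prop :=
  IsProjInM s ∧ s ∘ₗ a = a ∧
    ∀ p : HS2 →ₗ[ℂ] HS2, IsProjInM p → p ∘ₗ a = a → p ∘ₗ s = s

/-- The trace `τ(L_p) = Tr(p)` on `M` (evaluated via `P ↦ Re Tr (P 1)`). -/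
def tauM (P : HS2 →ₗ[ℂ] HS2) : ℝ := ((P 1).trace).re

/-- The transpose operator `a : ξ ↦ ξᵗ` on `HS2`. -/
def Ttr : HS2 →ₗ[ℂ] HS2 :=
  { toFun := fun ξ => ξᵀ
    map_add' := fun ξ η => Matrix.transpose_add ξ η
    map_smul' := fun c ξ => Matrix.transpose_smul c ξ }

/-- The matrix unit `e₁₁ ∈ M₂(ℂ)`. -/
def e11 : HS2 := Matrix.single (0 : Fin 2) (0 : Fin 2) (1 : ℂ)

lemma lmul_apply (b ξ : HS2) : Lmul b ξ = b * ξ := rfl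

lemma lmul_comp (b c : HS2) : Lmul b ∘ₗ Lmul c = Lmul (b * c) := by
  ext ξ : 1
  simp [Lmul, Matrix.mul_assoc]

lemma tauM_lmul (b : HS2) : tauM (Lmul b) = (b.trace).re := by
  simp [tauM, lmul_apply]

lemma isProjInM_of (b : HS2) (h1 : b * b = b) (h2 : bᴴ = b) : IsProjInM (Lmul b) := by
  refine ⟨⟨b, rfl⟩, ?_, ?_⟩
  · rw [lmul_comp, h1]
  · intro ξ η
    simp only [lmul_apply, hsInner]
    rw [Matrix.conjTranspose_mul, h2, Matrix.mul_assoc, ← Matrix.mul_assoc]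

lemma herm_of_selfAdj (b : HS2)
    (h : ∀ ξ η : HS2, hsInner (Lmul b ξ) η = hsInner ξ (Lmul b η)) : bᴴ = b := by
  have key : ∀ i j : Fin 2, b i j = (starRingEnd ℂ) (b j i) := by
    intro i j
    have H := h (Matrix.single j 0 1) (Matrix.single i 0 1)
    fin_cases i <;> fin_cases j <;>
      simpa [hsInner, lmul_apply, Matrix.trace, Matrix.mul_apply, Fin.sum_univ_two,
        Matrix.single, Matrix.conjTranspose_apply, Matrix.diag] using H
  ext i j
  rw [Matrix.conjTranspose_apply]
  exact (key i j).symm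

lemma proj_rep {P : HS2 →ₗ[ℂ] HS2} (h : IsProjInM P) :
    ∃ b : HS2, P = Lmul b ∧ b * b = b ∧ bᴴ = b := by
  obtain ⟨⟨b, rfl⟩, hidem, hsa⟩ := h
  refine ⟨b, rfl, ?_, herm_of_selfAdj b hsa⟩
  rw [lmul_comp] at hidem
  have := congrArg (fun f => f 1) hidem
  simpa [lmul_apply] using this

lemma vecSupp_unique {ξ : HS2} {s s' : HS2 →ₗ[ℂ] HS2}
    (h : IsVecSupp ξ s) (h' : IsVecSupp ξ s') : s = s' := by
  obtain ⟨b, rfl, hb, hbh⟩ := proj_rep h.1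
  obtain ⟨b', rfl, hb', hbh'⟩ := proj_rep h'.1
  have h1 : Lmul b' ∘ₗ Lmul b = Lmul b := h.2.2 _ h'.1 h'.2.1
  have h2 : Lmul b ∘ₗ Lmul b' = Lmul b' := h'.2.2 _ h.1 h.2.1
  rw [lmul_comp] at h1 h2
  have e1 : b' * b = b := by simpa [lmul_apply] using congrArg (fun f => f 1) h1
  have e2 : b * b' = b' := by simpa [lmul_apply] using congrArg (fun f => f 1) h2
  have e3 : b * b' = b := by
    have := congrArg Matrix.conjTranspose e1
    rwa [Matrix.conjTranspose_mul, hbh, hbh'] at this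
  rw [show b = b' by rw [← e3, e2]]

lemma Ttr_apply (ξ : HS2) : Ttr ξ = ξᵀ := rfl

lemma vecSupp_zero : IsVecSupp 0 (Lmul 0) := by
  refine ⟨isProjInM_of 0 (by simp) (by simp), by simp [lmul_apply], ?_⟩
  intro p hp hpξ
  ext ζ : 1
  simp [lmul_apply, LinearMap.comp_apply]

lemma vecSupp_invertible (ξ : HS2) (h : IsUnit ξ.det) : IsVecSupp ξ (Lmul 1) := by
  refine ⟨isProjInM_of 1 (by simp) (by simp), by simp [lmul_apply], ?_⟩
  intro p hp hpξ
  obtain ⟨q, rfl, hqq, hqh⟩ := proj_rep hp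
  have hqξ : q * ξ = ξ := hpξ
  have hq1 : q = 1 := by
    calc q = q * ξ * ξ⁻¹ := by
            rw [Matrix.mul_assoc, Matrix.mul_nonsing_inv _ h, Matrix.mul_one]
    _ = 1 := by rw [hqξ, Matrix.mul_nonsing_inv _ h]
  rw [lmul_comp, hq1, Matrix.one_mul]

lemma trace_mulconj (ξ : HS2) : (ξ * ξᴴ).trace =
    ((Complex.normSq (ξ 0 0) + Complex.normSq (ξ 0 1) + Complex.normSq (ξ 1 0)
      + Complex.normSq (ξ 1 1) : ℝ) : ℂ) := by
  simp [Matrix.trace, Matrix.mul_apply, Matrix.conjTranspose_apply, Fin.sum_univ_two,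
    Matrix.diag, Complex.mul_conj]
  ring

lemma trace_ne_zero (ξ : HS2) (hξ : ξ ≠ 0) : (ξ * ξᴴ).trace ≠ 0 := by
  rw [trace_mulconj]
  norm_cast
  intro h
  apply hξ
  have n00 := Complex.normSq_nonneg (ξ 0 0)
  have n01 := Complex.normSq_nonneg (ξ 0 1)
  have n10 := Complex.normSq_nonneg (ξ 1 0)
  have n11 := Complex.normSq_nonneg (ξ 1 1)
  have hz : ∀ i j : Fin 2, ξ i j = 0 := by
    intro i j
    rw [← Complex.normSq_eq_zero]
    fin_cases i <;> fin_cases j <;> simp only [Fin.zero_eta, Fin.mk_one] <;> nlinarith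
  ext i j
  simp [hz]

lemma key_rank1 (ξ : HS2) (hdet : ξ.det = 0) :
    ξ * ξᴴ * ξ = (ξ * ξᴴ).trace • ξ := by
  rw [Matrix.det_fin_two] at hdet
  ext i j
  fin_cases i <;> fin_cases j
  · simp [Matrix.mul_apply, Matrix.trace, Matrix.conjTranspose_apply, Fin.sum_univ_two,
      Matrix.diag]
    linear_combination (-(starRingEnd ℂ) (ξ 1 1)) * hdet
  · simp [Matrix.mul_apply, Matrix.trace, Matrix.conjTranspose_apply, Fin.sum_univ_two,
      Matrix.diag]
    linear_combination ((starRingEnd ℂ) (ξ 1 0)) * hdet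
  · simp [Matrix.mul_apply, Matrix.trace, Matrix.conjTranspose_apply, Fin.sum_univ_two,
      Matrix.diag]
    linear_combination ((starRingEnd ℂ) (ξ 0 1)) * hdet
  · simp [Matrix.mul_apply, Matrix.trace, Matrix.conjTranspose_apply, Fin.sum_univ_two,
      Matrix.diag]
    linear_combination (-(starRingEnd ℂ) (ξ 0 0)) * hdet

lemma vecSupp_rank1 (ξ : HS2) (hξ : ξ ≠ 0) (hdet : ξ.det = 0) :
    IsVecSupp ξ (Lmul ((ξ * ξᴴ).trace⁻¹ • (ξ * ξᴴ))) := by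
  have ht := trace_ne_zero ξ hξ
  have hkey := key_rank1 ξ hdet
  have hstar : star (ξ * ξᴴ).trace = (ξ * ξᴴ).trace := by
    rw [trace_mulconj]
    exact Complex.conj_ofReal _
  refine ⟨isProjInM_of _ ?_ ?_, ?_, ?_⟩
  · have hA : (ξ * ξᴴ) * (ξ * ξᴴ) = (ξ * ξᴴ).trace • (ξ * ξᴴ) := by
      rw [← Matrix.mul_assoc, hkey, Matrix.smul_mul]
    rw [Matrix.smul_mul, Matrix.mul_smul, hA, smul_smul, smul_smul]
    congr 1
    field_simp
  · rw [Matrix.conjTranspose_smul, Matrix.conjTranspose_mul,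
      Matrix.conjTranspose_conjTranspose, star_inv₀, hstar]
  · rw [lmul_apply, Matrix.smul_mul, hkey, smul_smul, inv_mul_cancel₀ ht, one_smul]
  · intro p hp hpξ
    obtain ⟨q, rfl, hqq, hqh⟩ := proj_rep hp
    have hqξ : q * ξ = ξ := hpξ
    rw [lmul_comp]
    congr 1
    rw [Matrix.mul_smul, ← Matrix.mul_assoc, hqξ]

lemma tauM_rank1 (ξ : HS2) (hξ : ξ ≠ 0) :
    tauM (Lmul ((ξ * ξᴴ).trace⁻¹ • (ξ * ξᴴ))) = 1 := by
  have ht := trace_ne_zero ξ hξ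
  rw [tauM_lmul, Matrix.trace_smul, smul_eq_mul, inv_mul_cancel₀ ht]
  simp


lemma lmul_one : Lmul (1:HS2) = LinearMap.id := by
  ext ξ : 1
  simp [lmul_apply]

/-- The transpose map `a` on `M₂(ℂ)` with the Hilbert–Schmidt inner product is
self-adjoint and vector-support preserving (`τ(s^M(aξ)) = τ(s^M(ξ))`, so `a` is
`1`-vector-constrained), yet for the projection `q = L_{e₁₁}` the left support of `a q`
is `1_H`, so `τ(s_ℓ^M(aq)) = 2 = 2·τ(q) > 1·τ(q)` and `a` is not `1`-constrained. -/
theorem statement12 :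
    (∀ ξ η : HS2, hsInner (Ttr ξ) η = hsInner ξ (Ttr η)) ∧
    (∀ (ξ : HS2) (s t : HS2 →ₗ[ℂ] HS2),
      IsVecSupp ξ s → IsVecSupp (Ttr ξ) t → tauM t = tauM s) ∧
    (IsProjInM (Lmul e11) ∧ tauM (Lmul e11) = 1 ∧
      ∀ s : HS2 →ₗ[ℂ] HS2, IsLeftSupp (Ttr ∘ₗ Lmul e11) s →
        s = LinearMap.id ∧ tauM s = 2 ∧ ¬ tauM s ≤ 1 * tauM (Lmul e11)) := by
  have htau_e11 : tauM (Lmul e11) = 1 := by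
    simp [tauM_lmul, e11, Matrix.trace, Matrix.diag, Fin.sum_univ_two,
      Matrix.single]
  refine ⟨?_, ?_, ?_, htau_e11, ?_⟩
  · intro ξ η
    simp only [hsInner, Ttr_apply, Matrix.trace, Matrix.mul_apply, Fin.sum_univ_two,
      Matrix.conjTranspose_apply, Matrix.transpose_apply, Matrix.diag_apply]
    ring
  · intro ξ s t hs ht
    rw [Ttr_apply] at ht
    by_cases h0 : ξ = 0
    · subst h0
      rw [Matrix.transpose_zero] at ht
      rw [vecSupp_unique hs vecSupp_zero, vecSupp_unique ht vecSupp_zero]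
    · by_cases hdet : ξ.det = 0
      · have h0t : ξᵀ ≠ 0 := fun hc => h0 (by simpa [Matrix.transpose_eq_zero] using hc)
        rw [vecSupp_unique hs (vecSupp_rank1 ξ h0 hdet),
          vecSupp_unique ht (vecSupp_rank1 ξᵀ h0t (by rw [Matrix.det_transpose]; exact hdet)),
          tauM_rank1 ξ h0, tauM_rank1 ξᵀ h0t]
      · have hu : IsUnit ξ.det := isUnit_iff_ne_zero.mpr hdet
        have hut : IsUnit (ξᵀ).det := by rw [Matrix.det_transpose]; exact hu
        rw [vecSupp_unique hs (vecSupp_invertible ξ hu),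
          vecSupp_unique ht (vecSupp_invertible ξᵀ hut)]
  · refine isProjInM_of e11 ?_ ?_
    · ext i j
      fin_cases i <;> fin_cases j <;>
        simp [e11, Matrix.mul_apply, Fin.sum_univ_two, Matrix.single]
    · ext i j
      fin_cases i <;> fin_cases j <;>
        simp [e11, Matrix.single, Matrix.conjTranspose_apply]
  · intro s hs
    obtain ⟨hproj, heq, _⟩ := hs
    obtain ⟨b, rfl, hbb, hbh⟩ := proj_rep hproj
    have H1 := congrArg (fun f => f (1:HS2)) heq
    have H2 := congrArg (fun f => f (Matrix.single (0:Fin 2) (1:Fin 2) (1:ℂ))) heq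
    simp only [LinearMap.comp_apply, lmul_apply, Ttr_apply, Matrix.mul_one] at H1 H2
    have hb1 : b = 1 := by
      ext i j
      have h1 := Matrix.ext_iff.2 H1 i 0
      have h2 := Matrix.ext_iff.2 H2 i 0
      fin_cases i <;> fin_cases j <;>
        simp_all [e11, Matrix.mul_apply, Fin.sum_univ_two, Matrix.single,
          Matrix.transpose_apply, Matrix.one_apply]
    rw [hb1, lmul_one]
    refine ⟨rfl, ?_, ?_⟩
    · simp [tauM, Matrix.trace, Matrix.diag, Fin.sum_univ_two, Matrix.one_apply]
    · rw [htau_e11]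
      simp [tauM, Matrix.trace, Matrix.diag, Fin.sum_univ_two, Matrix.one_apply]


end QCG12
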